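/- Assume each r_i is real-valued and Lipschitz with respect to the L^p norm with constant c_i, i.e. |r_i(ξ) − r_i(η)| ≤ c_i‖ξ − η‖_p for all ξ, η ∈ L^p(Ω; ℝ). Then there exists a constant C > 0, depending only on c₁,…,c_d, such that for all set-valued portfolios 𝐗 and 𝐘 (with p-integrable selections) for which ω ↦ d_H(𝐗(ω), 𝐘(ω)) is measurable and p-integrable, one has d_H(ρ_s(𝐗), ρ_s(𝐘)) ≤ C‖d_H(𝐗, 𝐘)‖_p, where d_H denotes the (possibly infinite) Hausdorff distance between closed subsets of ℝ^d. -/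

import Mathlib

open MeasureTheory Set Filter
open scoped Pointwise ENNReal RealInnerProductSpace

noncomputable section

/-- `ℝ^d` with the Euclidean norm. -/
abbrev Vec (d : ℕ) := EuclideanSpace ℝ (Fin d)

/-- Effros measurability of a set-valued map: `{ω : X(ω) ∩ G ≠ ∅}` is measurable
for every open `G`. -/
def EffrosMeasurable {Ω : Type*} [MeasurableSpace Ω] {d : ℕ} (X : Ω → Set (Vec d)) : Prop :=
  ∀ G : Set (Vec d), IsOpen G → MeasurableSet {ω | (X ω ∩ G).Nonempty}

/-- A set-valued portfolio: an Effros-measurable map with nonempty closed convex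
lower-set values. -/
structure IsPortfolio {Ω : Type*} [MeasurableSpace Ω] {d : ℕ} (X : Ω → Set (Vec d)) : Prop where
  effros : EffrosMeasurable X
  nonempty : ∀ ω, (X ω).Nonempty
  isClosed : ∀ ω, IsClosed (X ω)
  convex : ∀ ω, Convex ℝ (X ω)
  lower : ∀ ω, ∀ x ∈ X ω, ∀ y : Vec d, (∀ i, y i ≤ x i) → y ∈ X ω

/-- A real-valued coherent risk measure on `L^p(Ω; ℝ)`: monotone (antitone in the gain),
cash invariant, subadditive and positively homogeneous. -/
structure IsCoherentR {Ω : Type*} [MeasurableSpace Ω] (μ : Measure Ω) (p : ℝ≥0∞)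
    (r : (Ω → ℝ) → ℝ) : Prop where
  mono : ∀ ξ η : Ω → ℝ, MemLp ξ p μ → MemLp η p μ → (∀ᵐ ω ∂μ, ξ ω ≤ η ω) → r η ≤ r ξ
  cash : ∀ ξ : Ω → ℝ, MemLp ξ p μ → ∀ c : ℝ, r (fun ω => ξ ω + c) = r ξ - c
  subadd : ∀ ξ η : Ω → ℝ, MemLp ξ p μ → MemLp η p μ →
    r (fun ω => ξ ω + η ω) ≤ r ξ + r η
  homog : ∀ ξ : Ω → ℝ, MemLp ξ p μ → ∀ c : ℝ, 0 < c →
    r (fun ω => c * ξ ω) = c * r ξ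

/-- The selection risk measure `ρ_{s,0}(𝐗)` (real-valued marginal risk measures). -/
def rho0R {Ω : Type*} [MeasurableSpace Ω] (μ : Measure Ω) (p : ℝ≥0∞) {d : ℕ}
    (r : Fin d → (Ω → ℝ) → ℝ) (X : Ω → Set (Vec d)) : Set (Vec d) :=
  {x | ∃ ξ : Ω → Vec d, MemLp ξ p μ ∧ (∀ᵐ ω ∂μ, ξ ω ∈ X ω) ∧
        ∀ i, r i (fun ω => ξ ω i + x i) ≤ 0}

def onevec (d : ℕ) : Vec d := WithLp.toLp 2 (fun _ => 1)

lemma coord_abs_le_norm {d : ℕ} (v : Vec d) (i : Fin d) : |v i| ≤ ‖v‖ := by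
  rw [EuclideanSpace.norm_eq]
  have h1 : |v i| = Real.sqrt (‖v i‖ ^ 2) := by
    rw [Real.sqrt_sq_eq_abs]; simp
  rw [h1]
  exact Real.sqrt_le_sqrt
    (Finset.single_le_sum (f := fun j => ‖v j‖ ^ 2) (fun j _ => sq_nonneg _) (Finset.mem_univ i))

lemma key_lemma {Ω : Type*} [MeasurableSpace Ω] (μ : Measure Ω) [IsProbabilityMeasure μ]
    {d : ℕ} (p : ℝ≥0∞)
    (r : Fin d → (Ω → ℝ) → ℝ) (c : Fin d → ℝ)
    (hr : ∀ i, IsCoherentR μ p (r i))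
    (hlip : ∀ i, ∀ ξ η : Ω → ℝ, MemLp ξ p μ → MemLp η p μ →
      |r i ξ - r i η| ≤ c i * (eLpNorm (fun ω => ξ ω - η ω) p μ).toReal)
    (C₀ : ℝ) (hC₀ : ∀ i, c i ≤ C₀)
    (X Y : Ω → Set (Vec d)) (hY : IsPortfolio Y)
    (hfin : ∀ᵐ ω ∂μ, EMetric.hausdorffEdist (X ω) (Y ω) ≠ ⊤)
    (hK : MemLp (fun ω => (EMetric.hausdorffEdist (X ω) (Y ω)).toReal) p μ)
    (x : Vec d) (hx : x ∈ rho0R μ p r X) :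
    x + ((C₀ * (eLpNorm (fun ω => (EMetric.hausdorffEdist (X ω) (Y ω)).toReal) p μ).toReal) •
      onevec d) ∈ rho0R μ p r Y := by
  obtain ⟨ξ, hξ, hξX, hξr⟩ := hx
  set h : Ω → ℝ := fun ω => (EMetric.hausdorffEdist (X ω) (Y ω)).toReal with hh
  set K : ℝ := (eLpNorm h p μ).toReal with hKdef
  have hK0 : 0 ≤ K := ENNReal.toReal_nonneg
  set u : Vec d := onevec d with hu
  refine ⟨fun ω => ξ ω - h ω • u, ?_, ?_, ?_⟩
  · have h1 : MemLp (fun ω => h ω • u) p μ :=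
      (ContinuousLinearMap.toSpanSingleton ℝ u).comp_memLp' hK
    exact hξ.sub h1
  · filter_upwards [hξX, hfin] with ω hmem hfinω
    have hne : (Y ω).Nonempty := hY.nonempty ω
    have h1 : EMetric.infEdist (ξ ω) (Y ω) ≤ EMetric.hausdorffEdist (X ω) (Y ω) :=
      EMetric.infEdist_le_hausdorffEdist_of_mem hmem
    have h2 : Metric.infDist (ξ ω) (Y ω) ≤ h ω := ENNReal.toReal_mono hfinω h1
    obtain ⟨y, hyY, hyd⟩ := (hY.isClosed ω).exists_infDist_eq_dist hne (ξ ω)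
    refine hY.lower ω y hyY _ fun i => ?_
    have h3 : |ξ ω i - y i| ≤ dist (ξ ω) y := by
      rw [dist_eq_norm]
      have := coord_abs_le_norm (ξ ω - y) i
      simpa using this
    have h4 : dist (ξ ω) y ≤ h ω := hyd ▸ h2
    have h5 : (ξ ω - h ω • u) i = ξ ω i - h ω := by simp [hu, onevec]
    rw [h5]
    have := abs_le.mp h3
    linarith [this.2]
  · intro i
    have hcoordξ : MemLp (fun ω => ξ ω i) p μ :=
      (EuclideanSpace.proj i (𝕜 := ℝ)).comp_memLp' hξ
    have hg : MemLp (fun ω => ξ ω i + x i) p μ := hcoordξ.add (memLp_const _)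
    have hg' : MemLp (fun ω => (ξ ω i - h ω) + x i) p μ := (hcoordξ.sub hK).add (memLp_const _)
    have hlipi := hlip i (fun ω => (ξ ω i - h ω) + x i) (fun ω => ξ ω i + x i) hg' hg
    have heq : (fun ω => ((ξ ω i - h ω) + x i) - (ξ ω i + x i)) = fun ω => -h ω :=
      funext fun ω => by ring
    rw [heq] at hlipi
    have heq2 : eLpNorm (fun ω => -h ω) p μ = eLpNorm h p μ := eLpNorm_neg h p μ
    rw [heq2] at hlipi
    have hr0 : r i (fun ω => ξ ω i + x i) ≤ 0 := hξr i
    have hr1 : r i (fun ω => (ξ ω i - h ω) + x i) ≤ c i * K := by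
      have := abs_le.mp hlipi
      linarith [this.2]
    have heq3 : (fun ω => (ξ ω - h ω • u) i + (x + (C₀ * K) • u) i) =
        fun ω => ((ξ ω i - h ω) + x i) + (C₀ * K) := by
      funext ω; simp [hu, onevec]; ring
    beta_reduce
    rw [heq3]
    have hcash := (hr i).cash (fun ω => (ξ ω i - h ω) + x i) hg' (C₀ * K)
    beta_reduce at hcash
    rw [hcash]
    have : c i * K ≤ C₀ * K := mul_le_mul_of_nonneg_right (hC₀ i) hK0
    linarith

/-- Theorem 3.3 (Lipschitz property): if all components of `𝐫` are finite and Lipschitz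
in the `L^p` norm, then there is a constant `C > 0` such that
`d_H(ρ_s(𝐗), ρ_s(𝐘)) ≤ C ‖d_H(𝐗, 𝐘)‖_p` for all set-valued portfolios `𝐗, 𝐘`. -/
theorem statement5 {Ω : Type*} [MeasurableSpace Ω] (μ : Measure Ω) [IsProbabilityMeasure μ]
    [μ.IsComplete] {d : ℕ} (p : ℝ≥0∞) (hp : 1 ≤ p)
    (r : Fin d → (Ω → ℝ) → ℝ) (c : Fin d → ℝ)
    (hr : ∀ i, IsCoherentR μ p (r i))
    (hlip : ∀ i, ∀ ξ η : Ω → ℝ, MemLp ξ p μ → MemLp η p μ →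
      |r i ξ - r i η| ≤ c i * (eLpNorm (fun ω => ξ ω - η ω) p μ).toReal) :
    ∃ C > (0 : ℝ), ∀ X Y : Ω → Set (Vec d), IsPortfolio X → IsPortfolio Y →
      (∃ ξ : Ω → Vec d, MemLp ξ p μ ∧ ∀ᵐ ω ∂μ, ξ ω ∈ X ω) →
      (∃ η : Ω → Vec d, MemLp η p μ ∧ ∀ᵐ ω ∂μ, η ω ∈ Y ω) →
      (∀ᵐ ω ∂μ, EMetric.hausdorffEdist (X ω) (Y ω) ≠ ⊤) →
      MemLp (fun ω => (EMetric.hausdorffEdist (X ω) (Y ω)).toReal) p μ →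
      EMetric.hausdorffEdist (closure (rho0R μ p r X)) (closure (rho0R μ p r Y)) ≤
        ENNReal.ofReal
          (C * (eLpNorm (fun ω => (EMetric.hausdorffEdist (X ω) (Y ω)).toReal) p μ).toReal) := by

  classical
  set C₀ : ℝ := 1 + ∑ i, |c i| with hC₀def
  have hsum : 0 ≤ ∑ i, |c i| := Finset.sum_nonneg fun i _ => abs_nonneg _
  have hC₀pos : 0 < C₀ := by rw [hC₀def]; linarith
  have hC₀ : ∀ i, c i ≤ C₀ := fun i =>
    le_trans (le_abs_self _) (le_trans
      (Finset.single_le_sum (f := fun j => |c j|) (fun j _ => abs_nonneg _) (Finset.mem_univ i))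
      (by rw [hC₀def]; linarith))
  have hu0 : 0 ≤ ‖onevec d‖ := norm_nonneg _
  refine ⟨C₀ * (‖onevec d‖ + 1), by positivity, ?_⟩
  intro X Y hX hY _ _ hfin hK
  set h : Ω → ℝ := fun ω => (EMetric.hausdorffEdist (X ω) (Y ω)).toReal with hh
  set K : ℝ := (eLpNorm h p μ).toReal with hKdef
  have hK0 : 0 ≤ K := ENNReal.toReal_nonneg
  have hbound : ∀ x : Vec d, ∀ T : Set (Vec d), x + (C₀ * K) • onevec d ∈ T →
      EMetric.infEdist x T ≤ ENNReal.ofReal (C₀ * (‖onevec d‖ + 1) * K) := by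
    intro x T hmem
    calc EMetric.infEdist x T ≤ edist x (x + (C₀ * K) • onevec d) :=
          EMetric.infEdist_le_edist_of_mem hmem
      _ = ENNReal.ofReal (dist x (x + (C₀ * K) • onevec d)) := by
          rw [edist_dist]
      _ ≤ ENNReal.ofReal (C₀ * (‖onevec d‖ + 1) * K) := by
          apply ENNReal.ofReal_le_ofReal
          rw [dist_self_add_right, norm_smul, Real.norm_eq_abs,
            abs_of_nonneg (by positivity : (0:ℝ) ≤ C₀ * K)]
          nlinarith
  change Metric.hausdorffEDist (closure (rho0R μ p r X)) (closure (rho0R μ p r Y)) ≤ _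
  rw [EMetric.hausdorffEdist_closure]
  apply EMetric.hausdorffEdist_le_of_infEdist
  · intro x hx
    exact hbound x _ (key_lemma μ p r c hr hlip C₀ hC₀ X Y hY hfin hK x hx)
  · intro x hx
    have hcomm : (fun ω => (EMetric.hausdorffEdist (Y ω) (X ω)).toReal) = h :=
      funext fun ω => by unfold EMetric.hausdorffEdist; rw [EMetric.hausdorffEdist_comm]; rfl
    have hfin' : ∀ᵐ ω ∂μ, EMetric.hausdorffEdist (Y ω) (X ω) ≠ ⊤ := by
      filter_upwards [hfin] with ω hω
      unfold EMetric.hausdorffEdist at hω ⊢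
      rwa [EMetric.hausdorffEdist_comm]
    have hK' : MemLp (fun ω => (EMetric.hausdorffEdist (Y ω) (X ω)).toReal) p μ :=
      hcomm ▸ hK
    have hmem := key_lemma μ p r c hr hlip C₀ hC₀ Y X hX hfin' hK' x hx
    rw [hcomm] at hmem
    exact hbound x _ hmem
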